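/- Let A be an n×n complex matrix and M, N Hermitian positive definite n×n matrices. Then 0 ∈ W(A) if and only if 0 ∈ W(A†_{M,N}), where W(B) = {⟨Bx, x⟩ : x ∈ ℂⁿ, ‖x‖ = 1} is the numerical range. -/
import Mathlib

open Matrix Filter Topology
open scoped ComplexOrder

/-- Conjugating a quadratic form. -/
private lemma conj_quad {n : ℕ} (A : Matrix (Fin n) (Fin n) ℂ) (x : Fin n → ℂ) :
    star x ⬝ᵥ Aᴴ.mulVec x = star (star x ⬝ᵥ A.mulVec x) := by
  rw [Matrix.star_dotProduct, Matrix.star_mulVec, conjTranspose_conjTranspose,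
    ← dotProduct_mulVec]

/-- Normalizing a nonzero vector annihilating a quadratic form. -/
private lemma normalize_aux {n : ℕ} (B : Matrix (Fin n) (Fin n) ℂ) (v : Fin n → ℂ)
    (hv : v ≠ 0) (h : star v ⬝ᵥ B.mulVec v = 0) :
    ∃ y, star y ⬝ᵥ y = 1 ∧ star y ⬝ᵥ B.mulVec y = 0 := by
  obtain ⟨i, hi⟩ := Function.ne_iff.mp hv
  set S : ℝ := ∑ j, Complex.normSq (v j) with hS
  have hSpos : 0 < S :=
    Finset.sum_pos' (fun j _ => Complex.normSq_nonneg _)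
      ⟨i, Finset.mem_univ i, by simpa using Complex.normSq_pos.mpr hi⟩
  have hvv : star v ⬝ᵥ v = (S : ℂ) := by
    simp only [dotProduct, Pi.star_apply, RCLike.star_def, hS]
    push_cast
    exact Finset.sum_congr rfl fun j _ => by rw [Complex.normSq_eq_conj_mul_self]
  refine ⟨(((Real.sqrt S)⁻¹ : ℝ) : ℂ) • v, ?_, ?_⟩
  · have hcr : star ((((Real.sqrt S)⁻¹ : ℝ) : ℂ)) = (((Real.sqrt S)⁻¹ : ℝ) : ℂ) := by
      simp [Complex.conj_ofReal]
    rw [star_smul, smul_dotProduct, dotProduct_smul, hvv, hcr, smul_eq_mul, smul_eq_mul]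
    have key : ((Real.sqrt S)⁻¹ : ℝ) * ((Real.sqrt S)⁻¹ * S) = 1 := by
      rw [← mul_assoc, ← mul_inv, Real.mul_self_sqrt hSpos.le, inv_mul_cancel₀ hSpos.ne']
    exact_mod_cast key
  · rw [Matrix.mulVec_smul, star_smul, smul_dotProduct, dotProduct_smul, h]
    simp

/-- Key lemma: if `XAX = X` and the quadratic form of `A` vanishes at some unit
vector, then so does that of `X`. -/
private lemma key {n : ℕ} (A X : Matrix (Fin n) (Fin n) ℂ) (hXAX : X * A * X = X)
    (h : ∃ x, star x ⬝ᵥ x = 1 ∧ star x ⬝ᵥ A.mulVec x = 0) :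
    ∃ y, star y ⬝ᵥ y = 1 ∧ star y ⬝ᵥ X.mulVec y = 0 := by
  obtain ⟨x, hx1, hx2⟩ := h
  by_cases hdet : X.det = 0
  · obtain ⟨v, hv0, hv⟩ := Matrix.exists_mulVec_eq_zero_iff.mpr hdet
    exact normalize_aux X v hv0 (by rw [hv]; simp)
  · -- X is invertible, hence A X = X A = 1.
    have hXinv : X⁻¹ * X = 1 := nonsing_inv_mul X (Ne.isUnit hdet)
    have hAX : A * X = 1 := by
      have h1 : X⁻¹ * (X * A * X) = X⁻¹ * X := by rw [hXAX]
      rwa [hXinv, ← Matrix.mul_assoc, ← Matrix.mul_assoc, hXinv, one_mul] at h1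
    have hXA : X * A = 1 := mul_eq_one_comm.mp hAX
    have hx0 : x ≠ 0 := by
      rintro rfl
      simp at hx1
    have hy0 : A.mulVec x ≠ 0 := by
      intro h0
      apply hx0
      have : (X * A).mulVec x = X.mulVec (A.mulVec x) := by rw [mulVec_mulVec]
      rw [hXA, one_mulVec, h0, mulVec_zero] at this
      exact this
    refine normalize_aux X (A.mulVec x) hy0 ?_
    rw [mulVec_mulVec, hXA, one_mulVec, Matrix.star_dotProduct, hx2, star_zero]

/-- The four equations characterizing the weighted Moore-Penrose inverse of `A`
with respect to the weights `(M, N)`. -/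
def IsWMP {m n : ℕ} (M : Matrix (Fin m) (Fin m) ℂ) (N : Matrix (Fin n) (Fin n) ℂ)
    (A : Matrix (Fin m) (Fin n) ℂ) (X : Matrix (Fin n) (Fin m) ℂ) : Prop :=
  A * X * A = A ∧ X * A * X = X ∧ (M * A * X)ᴴ = M * A * X ∧ (N * X * A)ᴴ = N * X * A

/-- 0 ∈ W(A) iff 0 ∈ W(A†_{M,N}), where
W(B) = {⟨Bx, x⟩ : ‖x‖ = 1}. -/
theorem stmt_17 {n : ℕ} (A M N : Matrix (Fin n) (Fin n) ℂ)
    (hM : M.PosDef) (hN : N.PosDef)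
    (X : Matrix (Fin n) (Fin n) ℂ) (hX : IsWMP M N A X) :
    (∃ x : Fin n → ℂ, star x ⬝ᵥ x = 1 ∧ star x ⬝ᵥ A.mulVec x = 0) ↔
      (∃ x : Fin n → ℂ, star x ⬝ᵥ x = 1 ∧ star x ⬝ᵥ X.mulVec x = 0) := by
  constructor
  · exact key A X hX.2.1
  · exact key X A hX.1
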